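/- arXiv:1501.00837 — 2 statements merged into one kernel-verified Lean document; each statement's English description precedes it below -/
import Mathlib

section
/- The function x̂ = Σ_{m=0}^{∞} Σ_{k=0}^{2^m−1} e_{m,k} on [0,1] attains its global maximum (2 + √2)/3 at t = 1/3 and t = 2/3. -/
noncomputable def e00 (t : ℝ) : ℝ := max (min t (1 - t)) 0

noncomputable def e (m : ℕ) (k : ℤ) (t : ℝ) : ℝ :=
  (2 : ℝ) ^ (-(m : ℝ) / 2) * e00 ((2 : ℝ) ^ m * t - k)

noncomputable def xhat (t : ℝ) : ℝ :=
  ∑' m : ℕ, ∑ k ∈ Finset.range (2 ^ m), e m k t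

/-- distance to the nearest integer -/
noncomputable def D (x : ℝ) : ℝ := min (Int.fract x) (1 - Int.fract x)

lemma D_nonneg (x : ℝ) : 0 ≤ D x :=
  le_min (Int.fract_nonneg x) (by linarith [Int.fract_lt_one x])

lemma D_le_half (x : ℝ) : D x ≤ 1 / 2 := by
  rcases le_or_gt (Int.fract x) (1/2) with h | h
  · exact le_trans (min_le_left _ _) h
  · exact le_trans (min_le_right _ _) (by linarith)

lemma D_add_int (x : ℝ) (n : ℤ) : D (x + n) = D x := by
  unfold D; rw [Int.fract_add_intCast]

lemma D_neg (x : ℝ) : D (-x) = D x := by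
  unfold D
  rcases eq_or_ne (Int.fract x) 0 with h | h
  · rw [h, Int.fract_neg_eq_zero.mpr h]
  · rw [Int.fract_neg h]; rw [min_comm]; ring_nf

lemma D_two_mul (x : ℝ) : D (2 * D x) = D (2 * x) := by
  have hf : Int.fract x = x - ⌊x⌋ := (Int.self_sub_floor x).symm
  rcases le_or_gt (Int.fract x) (1/2) with h | h
  · have hD : D x = Int.fract x := min_eq_left (by linarith)
    have : 2 * D x = 2 * x + (-(2 * ⌊x⌋) : ℤ) := by rw [hD, hf]; push_cast; ring
    rw [this, D_add_int]
  · have hD : D x = 1 - Int.fract x := min_eq_right (by linarith)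
    have : 2 * D x = -(2 * x) + ((2 * ⌊x⌋ + 2 : ℤ)) := by rw [hD, hf]; push_cast; ring
    rw [this, D_add_int, D_neg]

lemma D_le_one_sub {y : ℝ} (h0 : 0 ≤ y) (h1 : y ≤ 1) : D y ≤ 1 - y := by
  rcases lt_or_eq_of_le h1 with h | h
  · have : Int.fract y = y := Int.fract_eq_self.mpr ⟨h0, h⟩
    unfold D; rw [this]; exact min_le_right _ _
  · subst h; unfold D; rw [Int.fract_one]; norm_num

lemma e00_of_nonpos {y : ℝ} (h : y ≤ 0) : e00 y = 0 :=
  max_eq_right (min_le_of_left_le h)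

lemma e00_of_one_le {y : ℝ} (h : 1 ≤ y) : e00 y = 0 :=
  max_eq_right (min_le_of_right_le (by linarith))

lemma sum_e00 (N : ℕ) {x : ℝ} (hx0 : 0 ≤ x) (hxN : x ≤ N) :
    ∑ k ∈ Finset.range N, e00 (x - k) = D x := by
  rcases lt_or_eq_of_le hxN with h | h
  · have hfl0 : (0 : ℤ) ≤ ⌊x⌋ := Int.floor_nonneg.mpr hx0
    set k₀ : ℕ := ⌊x⌋.toNat with hk₀
    have hcast : (k₀ : ℝ) = (⌊x⌋ : ℝ) := by
      rw [hk₀]; exact_mod_cast congrArg (fun z : ℤ => (z : ℝ)) (Int.toNat_of_nonneg hfl0)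
    have hmem : k₀ ∈ Finset.range N := by
      rw [Finset.mem_range]
      have hzn : ⌊x⌋ < (N : ℤ) := Int.floor_lt.mpr (by exact_mod_cast h)
      omega
    rw [Finset.sum_eq_single_of_mem k₀ hmem]
    · have h1 : x - k₀ = Int.fract x := by rw [hcast, Int.self_sub_floor]
      rw [h1]
      unfold e00 D
      exact max_eq_left (le_min (Int.fract_nonneg x) (by linarith [Int.fract_lt_one x]))
    · intro k _ hk
      rcases lt_or_gt_of_ne hk with hlt | hgt
      · -- k < k₀ : x - k ≥ 1
        apply e00_of_one_le
        have : (k : ℝ) + 1 ≤ k₀ := by exact_mod_cast Nat.succ_le_of_lt hlt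
        have hfloor : (⌊x⌋ : ℝ) ≤ x := Int.floor_le x
        rw [hcast] at this; linarith
      · -- k₀ < k : x - k ≤ 0
        apply e00_of_nonpos
        have : (k₀ : ℝ) + 1 ≤ k := by exact_mod_cast Nat.succ_le_of_lt hgt
        have hfloor : x < (⌊x⌋ : ℝ) + 1 := Int.lt_floor_add_one x
        rw [hcast] at this; linarith
  · have hD : D x = 0 := by
      unfold D; rw [h, Int.fract_natCast]; norm_num
    rw [hD]
    apply Finset.sum_eq_zero
    intro k hkm
    apply e00_of_one_le
    have : (k : ℝ) + 1 ≤ N := by exact_mod_cast Nat.succ_le_of_lt (Finset.mem_range.mp hkm)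
    rw [h]; linarith

/-- the ratio -/
noncomputable def cc : ℝ := (Real.sqrt 2)⁻¹

lemma sqrt2_sq : Real.sqrt 2 ^ 2 = 2 := Real.sq_sqrt (by norm_num)

lemma sqrt2_gt_one : 1 < Real.sqrt 2 := by
  nlinarith [sqrt2_sq, Real.sqrt_nonneg 2]

lemma cc_pos : 0 < cc := inv_pos.mpr (by linarith [sqrt2_gt_one])

lemma cc_lt_one : cc < 1 := inv_lt_one_of_one_lt₀ sqrt2_gt_one

lemma cc_ge_half : 1 / 2 ≤ cc := by
  have h := sqrt2_gt_one
  have h2 : Real.sqrt 2 ≤ 2 := by nlinarith [sqrt2_sq]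
  rw [cc, le_inv_comm₀] <;> norm_num <;> nlinarith

lemma rpow_eq_cc_pow (m : ℕ) : (2 : ℝ) ^ (-(m : ℝ) / 2) = cc ^ m := by
  have h1 : (2 : ℝ) ^ (-(m : ℝ) / 2) = ((2 : ℝ) ^ ((-1 : ℝ) / 2)) ^ (m : ℕ) := by
    rw [← Real.rpow_natCast ((2:ℝ) ^ ((-1:ℝ)/2)) m, ← Real.rpow_mul (by norm_num)]
    ring_nf
  rw [h1]
  congr 1
  rw [show ((-1 : ℝ)/2) = -(1/2 : ℝ) by norm_num, Real.rpow_neg (by norm_num),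
    ← Real.sqrt_eq_rpow]
  rfl

lemma sum_e_eq (m : ℕ) {t : ℝ} (ht : t ∈ Set.Icc (0:ℝ) 1) :
    ∑ k ∈ Finset.range (2 ^ m), e m k t = cc ^ m * D ((2:ℝ) ^ m * t) := by
  have h2m : (0:ℝ) < 2 ^ m := by positivity
  have hx0 : 0 ≤ (2:ℝ) ^ m * t := mul_nonneg (le_of_lt h2m) ht.1
  have hxN : (2:ℝ) ^ m * t ≤ ((2 ^ m : ℕ) : ℝ) := by
    push_cast; nlinarith [ht.2]
  have := sum_e00 (2 ^ m) hx0 hxN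
  rw [← this, Finset.mul_sum]
  apply Finset.sum_congr rfl
  intro k _
  rw [e, rpow_eq_cc_pow]
  norm_num

lemma xhat_eq {t : ℝ} (ht : t ∈ Set.Icc (0:ℝ) 1) :
    xhat t = ∑' m : ℕ, cc ^ m * D ((2:ℝ) ^ m * t) := by
  unfold xhat
  exact tsum_congr fun m => sum_e_eq m ht

/-- the dual multipliers -/
noncomputable def Lam (c : ℝ) : ℕ → ℝ
  | 0 => 0
  | n + 1 => (c ^ n - Lam c n) / 2

lemma Lam_bounds {c : ℝ} (hc : 1/2 ≤ c) : ∀ n, 0 ≤ Lam c n ∧ Lam c n ≤ c ^ n := by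
  intro n
  induction n with
  | zero => simp [Lam]
  | succ n ih =>
    have hc0 : (0:ℝ) ≤ c := by linarith
    have hcn : (0:ℝ) ≤ c ^ n := pow_nonneg hc0 n
    constructor
    · show 0 ≤ (c ^ n - Lam c n) / 2
      linarith [ih.2]
    · show (c ^ n - Lam c n) / 2 ≤ c ^ (n+1)
      rw [pow_succ]
      nlinarith [ih.1]

lemma sum_a_bound {c : ℝ} (hc : 1/2 ≤ c) (u : ℕ → ℝ)
    (hk : ∀ n, 2 * u n + u (n + 1) ≤ 1) :
    ∀ N, ∑ n ∈ Finset.range N, c ^ n * (u n - 1/3) + Lam c N * (u N - 1/3) ≤ 0 := by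
  intro N
  induction N with
  | zero => simp [Lam]
  | succ N ih =>
    rw [Finset.sum_range_succ]
    have hL := (Lam_bounds hc (N+1)).1
    have h2 : c ^ N - Lam c N = 2 * Lam c (N + 1) := by
      show c ^ N - Lam c N = 2 * ((c ^ N - Lam c N) / 2); ring
    have hprod : Lam c (N+1) * (2 * (u N - 1/3) + (u (N+1) - 1/3)) ≤ 0 :=
      mul_nonpos_of_nonneg_of_nonpos hL (by linarith [hk N])
    have h3 : c ^ N * (u N - 1/3)
        = 2 * Lam c (N+1) * (u N - 1/3) + Lam c N * (u N - 1/3) := by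
      linear_combination (u N - 1/3) * h2
    nlinarith [ih, hprod, h3]

lemma main_ineq {c : ℝ} (hc : 1/2 ≤ c) (hc1 : c < 1) (u : ℕ → ℝ)
    (hu0 : ∀ n, 0 ≤ u n) (hk : ∀ n, 2 * u n + u (n + 1) ≤ 1) (N : ℕ) :
    ∑ n ∈ Finset.range N, c ^ n * u n ≤ 1 / (3 * (1 - c)) := by
  have hc0 : (0:ℝ) ≤ c := by linarith
  have h1c : (0:ℝ) < 1 - c := by linarith
  have hL := Lam_bounds hc N
  have hS := sum_a_bound hc u hk N
  have hsplit : ∑ n ∈ Finset.range N, c ^ n * u n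
      = ∑ n ∈ Finset.range N, c ^ n * (u n - 1/3)
        + (1/3) * ∑ n ∈ Finset.range N, c ^ n := by
    rw [Finset.mul_sum, ← Finset.sum_add_distrib]
    apply Finset.sum_congr rfl; intro n _; ring
  have hgeom : ∑ n ∈ Finset.range N, c ^ n = (c ^ N - 1) / (c - 1) :=
    geom_sum_eq (by linarith) N
  have hq : (0:ℝ) ≤ c ^ N := pow_nonneg hc0 N
  have hq1 : c ^ N ≤ 1 := pow_le_one₀ hc0 (le_of_lt hc1)
  have hbound : ∑ n ∈ Finset.range N, c ^ n * (u n - 1/3) ≤ c ^ N / 3 := by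
    nlinarith [hS, mul_nonneg hL.1 (hu0 N), hL.2]
  have hne : c - 1 ≠ 0 := by linarith
  have hne2 : (1:ℝ) - c ≠ 0 := by linarith
  have hgeomle : (1/3) * ∑ n ∈ Finset.range N, c ^ n = (1 - c ^ N) / (3 * (1 - c)) := by
    rw [hgeom]
    field_simp
    ring
  have hfin : c ^ N / 3 + (1 - c ^ N) / (3 * (1 - c)) ≤ 1 / (3 * (1 - c)) := by
    rw [div_add_div _ _ (by norm_num) (by positivity), div_le_div_iff₀ (by positivity) (by positivity)]
    nlinarith [mul_nonneg hq hc0]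
  linarith [hsplit, hbound, hgeomle, hfin]

lemma D_useq (t : ℝ) (n : ℕ) : D ((2:ℝ) ^ (n+1) * t) = D (2 * D ((2:ℝ) ^ n * t)) := by
  rw [D_two_mul]
  congr 1
  ring

lemma key_ineq (t : ℝ) (n : ℕ) :
    2 * D ((2:ℝ) ^ n * t) + D ((2:ℝ) ^ (n+1) * t) ≤ 1 := by
  rw [D_useq]
  have h0 := D_nonneg ((2:ℝ) ^ n * t)
  have h1 := D_le_half ((2:ℝ) ^ n * t)
  have := D_le_one_sub (y := 2 * D ((2:ℝ) ^ n * t)) (by linarith) (by linarith)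
  linarith

lemma D_third : D (1/3 : ℝ) = 1/3 := by
  unfold D
  rw [Int.fract_eq_self.mpr ⟨by norm_num, by norm_num⟩]
  norm_num

lemma D_two_third : D (2/3 : ℝ) = 1/3 := by
  unfold D
  rw [Int.fract_eq_self.mpr ⟨by norm_num, by norm_num⟩]
  norm_num

lemma D_pow_third : ∀ n : ℕ, D ((2:ℝ) ^ n * (1/3)) = 1/3 := by
  intro n
  induction n with
  | zero => simpa using D_third
  | succ n ih =>
    rw [D_useq, ih]
    rw [show (2:ℝ) * (1/3) = 2/3 by norm_num]
    exact D_two_third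

lemma D_pow_two_third : ∀ n : ℕ, D ((2:ℝ) ^ n * (2/3)) = 1/3 := by
  intro n
  induction n with
  | zero => simpa using D_two_third
  | succ n ih =>
    rw [D_useq, ih]
    rw [show (2:ℝ) * (1/3) = 2/3 by norm_num]
    exact D_two_third

lemma K_eq : 1 / (3 * (1 - cc)) = (2 + Real.sqrt 2) / 3 := by
  have hs : Real.sqrt 2 ^ 2 = 2 := sqrt2_sq
  have h1 : 1 < Real.sqrt 2 := sqrt2_gt_one
  have hne : Real.sqrt 2 ≠ 0 := by positivity
  have hne2 : Real.sqrt 2 - 1 ≠ 0 := by intro hh; nlinarith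
  rw [show cc = (Real.sqrt 2)⁻¹ from rfl]
  rw [div_eq_div_iff (by nlinarith [inv_lt_one_of_one_lt₀ h1] : (0:ℝ) < 3 * (1 - (Real.sqrt 2)⁻¹)).ne' (by norm_num : (3:ℝ) ≠ 0)]
  field_simp
  nlinarith

theorem stmt_6 :
    (∀ t ∈ Set.Icc (0 : ℝ) 1, xhat t ≤ (2 + Real.sqrt 2) / 3) ∧
    xhat (1 / 3) = (2 + Real.sqrt 2) / 3 ∧ xhat (2 / 3) = (2 + Real.sqrt 2) / 3 := by
  have hc := cc_ge_half
  have hc1 := cc_lt_one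
  have hc0 := cc_pos
  refine ⟨?_, ?_, ?_⟩
  · intro t ht
    rw [xhat_eq ht, ← K_eq]
    apply Real.tsum_le_of_sum_range_le
    · intro n
      exact mul_nonneg (pow_nonneg (le_of_lt hc0) n) (D_nonneg _)
    · intro N
      exact main_ineq hc hc1 _ (fun n => D_nonneg _) (fun n => key_ineq t n) N
  · rw [xhat_eq (by norm_num : (1/3:ℝ) ∈ Set.Icc (0:ℝ) 1)]
    have : ∀ m : ℕ, cc ^ m * D ((2:ℝ) ^ m * (1/3)) = cc ^ m * (1/3) := by
      intro m; rw [D_pow_third]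
    rw [tsum_congr this, tsum_mul_right, tsum_geometric_of_lt_one (le_of_lt hc0) hc1]
    rw [show (1 - cc)⁻¹ * (1/3) = 1 / (3 * (1 - cc)) by
      have h : (1:ℝ) - cc ≠ 0 := by linarith [cc_lt_one]
      field_simp]
    exact K_eq
  · rw [xhat_eq (by norm_num : (2/3:ℝ) ∈ Set.Icc (0:ℝ) 1)]
    have : ∀ m : ℕ, cc ^ m * D ((2:ℝ) ^ m * (2/3)) = cc ^ m * (1/3) := by
      intro m; rw [D_pow_two_third]
    rw [tsum_congr this, tsum_mul_right, tsum_geometric_of_lt_one (le_of_lt hc0) hc1]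
    rw [show (1 - cc)⁻¹ * (1/3) = 1 / (3 * (1 - cc)) by
      have h : (1:ℝ) - cc ≠ 0 := by linarith [cc_lt_one]
      field_simp]
    exact K_eq
end

section
/- The maximal uniform oscillation over the class 𝒳 equals (5 + 4√2)/6, i.e., max_{x∈𝒳} max_{s,t∈[0,1]} |x(t) − x(s)| = (5 + 4√2)/6, and this maximum is attained by the function x* = e_{0,0} + Σ_{m≥1}(Σ_{k=0}^{2^{m−1}−1} e_{m,k} − Σ_{ℓ=2^{m−1}}^{2^m−1} e_{m,ℓ}) at s = 1/3, t = 5/6. -/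
def mathcalX : Set (ℝ → ℝ) :=
  {x | ∃ θ : ℕ → ℕ → ℝ, (∀ m k, θ m k = 1 ∨ θ m k = -1) ∧
    ∀ t, x t = ∑' m : ℕ, ∑ k ∈ Finset.range (2 ^ m), θ m k * e m k t}

/-- Coefficients of the function `x*`. -/
noncomputable def θstar (m k : ℕ) : ℝ :=
  if m = 0 then 1 else if k < 2 ^ (m - 1) then 1 else -1

noncomputable def xstar (t : ℝ) : ℝ :=
  ∑' m : ℕ, ∑ k ∈ Finset.range (2 ^ m), θstar m k * e m k t

private lemma sq2 : Real.sqrt 2 * Real.sqrt 2 = 2 := Real.mul_self_sqrt (by norm_num)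
private lemma sqrt2_pos : 0 < Real.sqrt 2 := Real.sqrt_pos.mpr (by norm_num)
private lemma sqrt2_lt : Real.sqrt 2 < 3/2 := by nlinarith [sq2, sqrt2_pos]
private lemma sqrt2_gt : 4/3 < Real.sqrt 2 := by nlinarith [sq2, sqrt2_pos]
private lemma inv_sqrt2_eq : (Real.sqrt 2)⁻¹ = Real.sqrt 2 / 2 := by
  rw [eq_div_iff (by norm_num : (2:ℝ) ≠ 0), inv_mul_eq_div, div_eq_iff (ne_of_gt sqrt2_pos)]
  linarith [sq2]
private lemma q_nonneg : 0 ≤ (Real.sqrt 2)⁻¹ := by positivity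
private lemma q_lt_one : (Real.sqrt 2)⁻¹ < 1 := by
  rw [inv_sqrt2_eq]; linarith [sqrt2_lt]
private lemma rpow_eq_qpow (m : ℕ) : (2:ℝ) ^ (-(m:ℝ)/2) = ((Real.sqrt 2)⁻¹)^m := by
  rw [inv_pow, Real.sqrt_eq_rpow, ← Real.rpow_natCast ((2:ℝ) ^ ((1:ℝ)/2)) m,
    ← Real.rpow_mul (by norm_num : (0:ℝ) ≤ 2), ← Real.rpow_neg (by norm_num : (0:ℝ) ≤ 2)]
  ring_nf

private lemma e00_nonneg (x : ℝ) : 0 ≤ e00 x := le_max_right _ _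
private lemma e00_le_half (x : ℝ) : e00 x ≤ 1/2 := by
  unfold e00
  rcases le_total x (1/2) with h | h
  · exact max_le (le_trans (min_le_left _ _) h) (by norm_num)
  · exact max_le (le_trans (min_le_right _ _) (by linarith)) (by norm_num)
private lemma e00_zero_of_nonpos {x : ℝ} (h : x ≤ 0) : e00 x = 0 := by
  unfold e00; rw [max_eq_right]; exact le_trans (min_le_left _ _) h
private lemma e00_zero_of_one_le {x : ℝ} (h : 1 ≤ x) : e00 x = 0 := by
  unfold e00; rw [max_eq_right]; exact le_trans (min_le_right _ _) (by linarith)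
private lemma e00_mem_of_ne {x : ℝ} (h : e00 x ≠ 0) : 0 < x ∧ x < 1 := by
  by_contra hc
  push_neg at hc
  rcases le_or_gt x 0 with h0 | h0
  · exact h (e00_zero_of_nonpos h0)
  · exact h (e00_zero_of_one_le (hc h0))
private lemma e00_left {x : ℝ} (h0 : 0 ≤ x) (h1 : x ≤ 1/2) : e00 x = x := by
  unfold e00; rw [min_eq_left (by linarith), max_eq_left h0]
private lemma e00_right {x : ℝ} (h0 : 1/2 ≤ x) (h1 : x ≤ 1) : e00 x = 1 - x := by
  unfold e00; rw [min_eq_right (by linarith), max_eq_left (by linarith)]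
private lemma e00_double_left {s : ℝ} (h0 : 0 ≤ s) (h1 : s ≤ 1/2) :
    e00 (2*s) = min (2*s) (1 - 2*s) := by
  unfold e00; rw [max_eq_left (le_min (by linarith) (by linarith))]
private lemma e00_double_right {t : ℝ} (h0 : 1/2 ≤ t) (h1 : t ≤ 1) :
    e00 (2*t - 1) = min (2*t - 1) (2 - 2*t) := by
  unfold e00
  have : (1:ℝ) - (2*t - 1) = 2 - 2*t := by ring
  rw [this, max_eq_left (le_min (by linarith) (by linarith))]

noncomputable def Ufun (u : ℝ) : ℝ := (4 + Real.sqrt 2)/6 + (Real.sqrt 2/2) * u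
noncomputable def Bfun (u : ℝ) : ℝ := min (Ufun u) ((2 + Real.sqrt 2)/3)

private lemma Ufun_expand (x : ℝ) :
    (Real.sqrt 2)⁻¹ * Ufun x = (2*Real.sqrt 2 + 1)/6 + x/2 := by
  rw [inv_sqrt2_eq]; unfold Ufun
  linear_combination (1/12 + x/4) * sq2

private lemma Ufun_mono {x y : ℝ} (h : x ≤ y) : Ufun x ≤ Ufun y := by
  unfold Ufun; nlinarith [sqrt2_pos]

private lemma Ufun_nonneg {x : ℝ} (h : 0 ≤ x) : 0 ≤ Ufun x := by
  unfold Ufun; nlinarith [sqrt2_pos]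

private lemma Bfun_nonneg {u : ℝ} (h : 0 ≤ u) : 0 ≤ Bfun u :=
  le_min (Ufun_nonneg h) (by positivity)

private lemma Bfun_le_U (u : ℝ) : Bfun u ≤ Ufun u := min_le_left _ _
private lemma Bfun_le_k (u : ℝ) : Bfun u ≤ (2 + Real.sqrt 2)/3 := min_le_right _ _

private lemma I1 {a x : ℝ} (hx : x ≤ 1 - 2*a) :
    a + (Real.sqrt 2)⁻¹ * Ufun x ≤ (2 + Real.sqrt 2)/3 := by
  rw [Ufun_expand]; linarith [sqrt2_gt, sqrt2_lt]

private lemma I2 {c x : ℝ} (hx : x ≤ 2*c) :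
    -c + (Real.sqrt 2)⁻¹ * Ufun x ≤ (1 + 2*Real.sqrt 2)/6 := by
  rw [Ufun_expand]; linarith

private lemma Bfun_ge_self {u : ℝ} (h0 : 0 ≤ u) (h1 : u ≤ 1/2) : u ≤ Bfun u := by
  refine le_min ?_ (by linarith [sqrt2_gt])
  unfold Ufun; nlinarith [sqrt2_gt]

private lemma Bstep {u : ℝ} (h0 : 0 ≤ u) (h1 : u ≤ 1/2) :
    u + (Real.sqrt 2)⁻¹ * Bfun (min (2*u) (1 - 2*u)) ≤ Bfun u := by
  have hq := q_nonneg
  have hBk := Bfun_le_k (min (2*u) (1 - 2*u))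
  have hkq : (Real.sqrt 2)⁻¹ * ((2 + Real.sqrt 2)/3) = (Real.sqrt 2 + 1)/3 := by
    rw [inv_sqrt2_eq]; linear_combination (1/6) * sq2
  rcases le_total u (1/6) with hu | hu
  · -- B(min) ≤ U(min) ≤ U(2u)
    have h2 : Bfun (min (2*u) (1 - 2*u)) ≤ Ufun (2*u) :=
      le_trans (Bfun_le_U _) (Ufun_mono (min_le_left _ _))
    refine le_min ?_ ?_
    · have : (Real.sqrt 2)⁻¹ * Bfun (min (2*u) (1 - 2*u)) ≤ (Real.sqrt 2)⁻¹ * Ufun (2*u) :=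
        mul_le_mul_of_nonneg_left h2 hq
      rw [Ufun_expand] at this
      unfold Ufun
      nlinarith [sqrt2_gt, sqrt2_lt]
    · have : (Real.sqrt 2)⁻¹ * Bfun (min (2*u) (1 - 2*u)) ≤ (Real.sqrt 2 + 1)/3 := by
        rw [← hkq]; exact mul_le_mul_of_nonneg_left hBk hq
      linarith [sqrt2_lt]
  · rcases le_total u (1/3) with hu3 | hu3
    · refine le_min ?_ ?_
      · have : (Real.sqrt 2)⁻¹ * Bfun (min (2*u) (1 - 2*u)) ≤ (Real.sqrt 2 + 1)/3 := by
          rw [← hkq]; exact mul_le_mul_of_nonneg_left hBk hq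
        unfold Ufun; nlinarith [sqrt2_gt, sqrt2_lt]
      · have : (Real.sqrt 2)⁻¹ * Bfun (min (2*u) (1 - 2*u)) ≤ (Real.sqrt 2 + 1)/3 := by
          rw [← hkq]; exact mul_le_mul_of_nonneg_left hBk hq
        linarith [sqrt2_lt]
    · -- u ≥ 1/3 : min = 1 - 2u
      have hmin : min (2*u) (1 - 2*u) = 1 - 2*u := min_eq_right (by linarith)
      have hB : Bfun (min (2*u) (1 - 2*u)) ≤ Ufun (1 - 2*u) := by
        rw [hmin]; exact Bfun_le_U _
      have h3 : u + (Real.sqrt 2)⁻¹ * Bfun (min (2*u) (1 - 2*u)) ≤ (2 + Real.sqrt 2)/3 := by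
        have := mul_le_mul_of_nonneg_left hB hq
        have hI := I1 (a := u) (x := 1 - 2*u) (by linarith)
        linarith
      refine le_min (le_trans h3 ?_) h3
      unfold Ufun; nlinarith [sqrt2_gt]

private lemma key_split {s t : ℝ} (hs0 : 0 ≤ s) (hs : s ≤ 1/2) (ht : 1/2 ≤ t) (ht1 : t ≤ 1) :
    |e00 t - e00 s| + (Real.sqrt 2)⁻¹ * (Bfun (e00 (2*s)) + Bfun (e00 (2*t - 1)))
      ≤ (5 + 4*Real.sqrt 2)/6 := by
  have hq := q_nonneg
  rw [e00_left hs0 hs, e00_right ht ht1, e00_double_left hs0 hs, e00_double_right ht ht1]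
  have hBs : Bfun (min (2*s) (1 - 2*s)) ≤ Ufun (min (2*s) (1 - 2*s)) := Bfun_le_U _
  have hBt : Bfun (min (2*t - 1) (2 - 2*t)) ≤ Ufun (min (2*t - 1) (2 - 2*t)) := Bfun_le_U _
  have hmul : (Real.sqrt 2)⁻¹ * (Bfun (min (2*s) (1 - 2*s)) + Bfun (min (2*t - 1) (2 - 2*t)))
      ≤ (Real.sqrt 2)⁻¹ * Ufun (min (2*s) (1 - 2*s))
        + (Real.sqrt 2)⁻¹ * Ufun (min (2*t - 1) (2 - 2*t)) := by
    nlinarith [hBs, hBt, hq]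
  rcases le_total s (1 - t) with hc | hc
  · -- |1 - t - s| = (1-t) - s ; treat (1-t) as "a", s as "c"
    have habs : |1 - t - s| = (1 - t) - s := abs_of_nonneg (by linarith)
    have hI1 := I1 (a := 1 - t) (x := min (2*t - 1) (2 - 2*t))
      (by rw [min_le_iff]; left; linarith)
    have hI2 := I2 (c := s) (x := min (2*s) (1 - 2*s))
      (by rw [min_le_iff]; left; linarith)
    rw [habs]; linarith
  · have habs : |1 - t - s| = s - (1 - t) := by
      rw [abs_of_nonpos (by linarith)]; ring
    have hI1 := I1 (a := s) (x := min (2*s) (1 - 2*s))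
      (by rw [min_le_iff]; right; linarith)
    have hI2 := I2 (c := 1 - t) (x := min (2*t - 1) (2 - 2*t))
      (by rw [min_le_iff]; right; linarith)
    rw [habs]; linarith

private lemma half_step {X : ℝ} (hX : X ≤ (5 + 4*Real.sqrt 2)/6) (hX0 : 0 ≤ X) :
    1/2 + (Real.sqrt 2)⁻¹ * X ≤ (5 + 4*Real.sqrt 2)/6 := by
  have h : (Real.sqrt 2)⁻¹ * ((5 + 4*Real.sqrt 2)/6) = (5*Real.sqrt 2 + 8)/12 := by
    rw [inv_sqrt2_eq]; linear_combination (1/3) * sq2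
  have h2 : (Real.sqrt 2)⁻¹ * X ≤ (5*Real.sqrt 2 + 8)/12 := by
    rw [← h]; exact mul_le_mul_of_nonneg_left hX q_nonneg
  linarith [sqrt2_gt]

noncomputable def phiSum (n : ℕ) (t : ℝ) : ℝ :=
  ∑ m ∈ Finset.range n, ((Real.sqrt 2)⁻¹)^m * ∑ k ∈ Finset.range (2^m), e00 ((2:ℝ)^m * t - k)

noncomputable def dSum (n : ℕ) (s t : ℝ) : ℝ :=
  ∑ m ∈ Finset.range n, ((Real.sqrt 2)⁻¹)^m *
    ∑ k ∈ Finset.range (2^m), |e00 ((2:ℝ)^m * t - k) - e00 ((2:ℝ)^m * s - k)|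

private lemma inner_scale_left (G : ℝ → ℝ → ℝ) (hG : G 0 0 = 0) (m : ℕ) {s t : ℝ}
    (hs : s ≤ 1/2) (ht : t ≤ 1/2) :
    ∑ k ∈ Finset.range (2^(m+1)), G (e00 ((2:ℝ)^(m+1) * t - k)) (e00 ((2:ℝ)^(m+1) * s - k))
      = ∑ k ∈ Finset.range (2^m), G (e00 ((2:ℝ)^m * (2*t) - k)) (e00 ((2:ℝ)^m * (2*s) - k)) := by
  have hsub : Finset.range (2^m) ⊆ Finset.range (2^(m+1)) :=
    Finset.range_subset_range.mpr (Nat.pow_le_pow_right (by norm_num) (Nat.le_succ m))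
  have hpow : (0:ℝ) < 2^m := by positivity
  rw [← Finset.sum_subset hsub ?_]
  · apply Finset.sum_congr rfl
    intro k _
    have h1 : (2:ℝ)^(m+1) * t - k = (2:ℝ)^m * (2*t) - k := by rw [pow_succ]; ring
    have h2 : (2:ℝ)^(m+1) * s - k = (2:ℝ)^m * (2*s) - k := by rw [pow_succ]; ring
    rw [h1, h2]
  · intro k _ hk
    have hk2 : (2^m : ℕ) ≤ k := by
      by_contra hco; exact hk (Finset.mem_range.mpr (by omega))
    have hkR : (2:ℝ)^m ≤ (k:ℝ) := by exact_mod_cast hk2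
    have hzt : (2:ℝ)^(m+1) * t - k ≤ 0 := by
      have : (2:ℝ)^(m+1) * t ≤ 2^m := by rw [pow_succ]; nlinarith
      linarith
    have hzs : (2:ℝ)^(m+1) * s - k ≤ 0 := by
      have : (2:ℝ)^(m+1) * s ≤ 2^m := by rw [pow_succ]; nlinarith
      linarith
    rw [e00_zero_of_nonpos hzt, e00_zero_of_nonpos hzs, hG]

private lemma inner_scale_right (G : ℝ → ℝ → ℝ) (hG : G 0 0 = 0) (m : ℕ) {s t : ℝ}
    (hs : 1/2 ≤ s) (ht : 1/2 ≤ t) :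
    ∑ k ∈ Finset.range (2^(m+1)), G (e00 ((2:ℝ)^(m+1) * t - k)) (e00 ((2:ℝ)^(m+1) * s - k))
      = ∑ k ∈ Finset.range (2^m),
          G (e00 ((2:ℝ)^m * (2*t - 1) - k)) (e00 ((2:ℝ)^m * (2*s - 1) - k)) := by
  have hpow : (0:ℝ) < 2^m := by positivity
  have hzero : ∀ k ∈ Finset.Ico (0:ℕ) (2^m),
      G (e00 ((2:ℝ)^(m+1) * t - k)) (e00 ((2:ℝ)^(m+1) * s - k)) = 0 := by
    intro k hkmem
    have hk2 : k < 2^m := by simpa using (Finset.mem_Ico.mp hkmem).2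
    have hkR : (k:ℝ) ≤ (2:ℝ)^m - 1 := by
      have h3 : (k + 1 : ℕ) ≤ 2^m := hk2
      have : ((k:ℝ) + 1) ≤ ((2^m : ℕ) : ℝ) := by exact_mod_cast h3
      push_cast at this ⊢; linarith
    have hzt : 1 ≤ (2:ℝ)^(m+1) * t - k := by
      have : (2:ℝ)^m ≤ (2:ℝ)^(m+1) * t := by rw [pow_succ]; nlinarith
      linarith
    have hzs : 1 ≤ (2:ℝ)^(m+1) * s - k := by
      have : (2:ℝ)^m ≤ (2:ℝ)^(m+1) * s := by rw [pow_succ]; nlinarith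
      linarith
    rw [e00_zero_of_one_le hzt, e00_zero_of_one_le hzs, hG]
  have hle : 2^m ≤ 2^(m+1) := Nat.pow_le_pow_right (by norm_num) (Nat.le_succ m)
  rw [Finset.range_eq_Ico, ← Finset.sum_Ico_consecutive _ (Nat.zero_le (2^m)) hle,
    Finset.sum_eq_zero hzero, zero_add, Finset.sum_Ico_eq_sum_range]
  have hdiff : 2^(m+1) - 2^m = 2^m := by rw [pow_succ]; omega
  rw [hdiff]
  apply Finset.sum_congr rfl
  intro k _
  have h1 : (2:ℝ)^(m+1) * t - ((2^m + k : ℕ) : ℝ) = (2:ℝ)^m * (2*t - 1) - k := by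
    push_cast [pow_succ]; ring
  have h2 : (2:ℝ)^(m+1) * s - ((2^m + k : ℕ) : ℝ) = (2:ℝ)^m * (2*s - 1) - k := by
    push_cast [pow_succ]; ring
  rw [h1, h2]

private lemma first_phi (t : ℝ) :
    ((Real.sqrt 2)⁻¹)^0 * ∑ k ∈ Finset.range (2^0), e00 ((2:ℝ)^0 * t - k) = e00 t := by
  norm_num

private lemma first_d (s t : ℝ) :
    ((Real.sqrt 2)⁻¹)^0 * ∑ k ∈ Finset.range (2^0),
      |e00 ((2:ℝ)^0 * t - k) - e00 ((2:ℝ)^0 * s - k)| = |e00 t - e00 s| := by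
  norm_num

private lemma phiSum_succ_left (n : ℕ) {t : ℝ} (ht : t ≤ 1/2) :
    phiSum (n+1) t = e00 t + (Real.sqrt 2)⁻¹ * phiSum n (2*t) := by
  unfold phiSum
  rw [Finset.sum_range_succ', first_phi, Finset.mul_sum]
  have hterm : ∀ m ∈ Finset.range n,
      ((Real.sqrt 2)⁻¹)^(m+1) * ∑ k ∈ Finset.range (2^(m+1)), e00 ((2:ℝ)^(m+1) * t - k)
      = (Real.sqrt 2)⁻¹ * (((Real.sqrt 2)⁻¹)^m
          * ∑ k ∈ Finset.range (2^m), e00 ((2:ℝ)^m * (2*t) - k)) := by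
    intro m _
    have hsc := inner_scale_left (fun x _ => x) rfl m ht ht
    rw [hsc, pow_succ]
    ring
  rw [Finset.sum_congr rfl hterm]
  ring

private lemma phiSum_succ_right (n : ℕ) {t : ℝ} (ht : 1/2 ≤ t) :
    phiSum (n+1) t = e00 t + (Real.sqrt 2)⁻¹ * phiSum n (2*t - 1) := by
  unfold phiSum
  rw [Finset.sum_range_succ', first_phi, Finset.mul_sum]
  have hterm : ∀ m ∈ Finset.range n,
      ((Real.sqrt 2)⁻¹)^(m+1) * ∑ k ∈ Finset.range (2^(m+1)), e00 ((2:ℝ)^(m+1) * t - k)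
      = (Real.sqrt 2)⁻¹ * (((Real.sqrt 2)⁻¹)^m
          * ∑ k ∈ Finset.range (2^m), e00 ((2:ℝ)^m * (2*t - 1) - k)) := by
    intro m _
    have hsc := inner_scale_right (fun x _ => x) rfl m ht ht
    rw [hsc, pow_succ]
    ring
  rw [Finset.sum_congr rfl hterm]
  ring

private lemma dSum_succ_left (n : ℕ) {s t : ℝ} (hs : s ≤ 1/2) (ht : t ≤ 1/2) :
    dSum (n+1) s t = |e00 t - e00 s| + (Real.sqrt 2)⁻¹ * dSum n (2*s) (2*t) := by
  unfold dSum
  rw [Finset.sum_range_succ', first_d, Finset.mul_sum]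
  have hterm : ∀ m ∈ Finset.range n,
      ((Real.sqrt 2)⁻¹)^(m+1) * ∑ k ∈ Finset.range (2^(m+1)),
        |e00 ((2:ℝ)^(m+1) * t - k) - e00 ((2:ℝ)^(m+1) * s - k)|
      = (Real.sqrt 2)⁻¹ * (((Real.sqrt 2)⁻¹)^m * ∑ k ∈ Finset.range (2^m),
          |e00 ((2:ℝ)^m * (2*t) - k) - e00 ((2:ℝ)^m * (2*s) - k)|) := by
    intro m _
    have hsc := inner_scale_left (fun x y => |x - y|) (by norm_num) m hs ht
    rw [hsc, pow_succ]
    ring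
  rw [Finset.sum_congr rfl hterm]
  ring

private lemma dSum_succ_right (n : ℕ) {s t : ℝ} (hs : 1/2 ≤ s) (ht : 1/2 ≤ t) :
    dSum (n+1) s t = |e00 t - e00 s| + (Real.sqrt 2)⁻¹ * dSum n (2*s - 1) (2*t - 1) := by
  unfold dSum
  rw [Finset.sum_range_succ', first_d, Finset.mul_sum]
  have hterm : ∀ m ∈ Finset.range n,
      ((Real.sqrt 2)⁻¹)^(m+1) * ∑ k ∈ Finset.range (2^(m+1)),
        |e00 ((2:ℝ)^(m+1) * t - k) - e00 ((2:ℝ)^(m+1) * s - k)|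
      = (Real.sqrt 2)⁻¹ * (((Real.sqrt 2)⁻¹)^m * ∑ k ∈ Finset.range (2^m),
          |e00 ((2:ℝ)^m * (2*t - 1) - k) - e00 ((2:ℝ)^m * (2*s - 1) - k)|) := by
    intro m _
    have hsc := inner_scale_right (fun x y => |x - y|) (by norm_num) m hs ht
    rw [hsc, pow_succ]
    ring
  rw [Finset.sum_congr rfl hterm]
  ring

private lemma dSum_succ_split (n : ℕ) {s t : ℝ} (hs : s ≤ 1/2) (ht : 1/2 ≤ t) :
    dSum (n+1) s t ≤ |e00 t - e00 s|
      + (Real.sqrt 2)⁻¹ * (phiSum n (2*s) + phiSum n (2*t - 1)) := by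
  unfold dSum phiSum
  rw [Finset.sum_range_succ', first_d]
  have hterm : ∀ m ∈ Finset.range n,
      ((Real.sqrt 2)⁻¹)^(m+1) * ∑ k ∈ Finset.range (2^(m+1)),
        |e00 ((2:ℝ)^(m+1) * t - k) - e00 ((2:ℝ)^(m+1) * s - k)|
      ≤ (Real.sqrt 2)⁻¹ * (((Real.sqrt 2)⁻¹)^m
            * ∑ k ∈ Finset.range (2^m), e00 ((2:ℝ)^m * (2*s) - k))
        + (Real.sqrt 2)⁻¹ * (((Real.sqrt 2)⁻¹)^m
            * ∑ k ∈ Finset.range (2^m), e00 ((2:ℝ)^m * (2*t - 1) - k)) := by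
    intro m _
    have habs : ∑ k ∈ Finset.range (2^(m+1)),
        |e00 ((2:ℝ)^(m+1) * t - k) - e00 ((2:ℝ)^(m+1) * s - k)|
        ≤ ∑ k ∈ Finset.range (2^(m+1)),
            (e00 ((2:ℝ)^(m+1) * t - k) + e00 ((2:ℝ)^(m+1) * s - k)) := by
      apply Finset.sum_le_sum
      intro k _
      rw [abs_sub_le_iff]
      constructor <;> linarith [e00_nonneg ((2:ℝ)^(m+1) * t - k), e00_nonneg ((2:ℝ)^(m+1) * s - k)]
    have hsplit : ∑ k ∈ Finset.range (2^(m+1)),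
        (e00 ((2:ℝ)^(m+1) * t - k) + e00 ((2:ℝ)^(m+1) * s - k))
        = (∑ k ∈ Finset.range (2^m), e00 ((2:ℝ)^m * (2*t - 1) - k))
          + ∑ k ∈ Finset.range (2^m), e00 ((2:ℝ)^m * (2*s) - k) := by
      rw [Finset.sum_add_distrib]
      have h1 := inner_scale_right (fun x _ => x) rfl m ht ht
      have h2 := inner_scale_left (fun x _ => x) rfl m hs hs
      rw [h1, h2]
    have hq : (0:ℝ) ≤ ((Real.sqrt 2)⁻¹)^(m+1) := by positivity
    have := mul_le_mul_of_nonneg_left habs hq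
    rw [hsplit] at this
    calc ((Real.sqrt 2)⁻¹)^(m+1) * ∑ k ∈ Finset.range (2^(m+1)),
        |e00 ((2:ℝ)^(m+1) * t - k) - e00 ((2:ℝ)^(m+1) * s - k)|
        ≤ ((Real.sqrt 2)⁻¹)^(m+1) * ((∑ k ∈ Finset.range (2^m), e00 ((2:ℝ)^m * (2*t - 1) - k))
            + ∑ k ∈ Finset.range (2^m), e00 ((2:ℝ)^m * (2*s) - k)) := this
      _ = _ := by rw [pow_succ]; ring
  have hsum := Finset.sum_le_sum hterm
  rw [Finset.sum_add_distrib, ← Finset.mul_sum, ← Finset.mul_sum] at hsum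
  linarith [hsum]

private lemma phiSum_le : ∀ n : ℕ, ∀ t : ℝ, 0 ≤ t → t ≤ 1 → phiSum n t ≤ Bfun (e00 t) := by
  intro n
  induction n with
  | zero =>
    intro t ht0 ht1
    unfold phiSum
    simp only [Finset.range_zero, Finset.sum_empty]
    exact Bfun_nonneg (e00_nonneg t)
  | succ n ih =>
    intro t ht0 ht1
    rcases le_total t (1/2) with h | h
    · rw [phiSum_succ_left n h]
      have hih := ih (2*t) (by linarith) (by linarith)
      have h1 : e00 t = t := e00_left ht0 h
      have h2 : e00 (2*t) = min (2*(e00 t)) (1 - 2*(e00 t)) := by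
        rw [h1]; exact e00_double_left ht0 h
      have hmul : (Real.sqrt 2)⁻¹ * phiSum n (2*t) ≤
          (Real.sqrt 2)⁻¹ * Bfun (min (2*(e00 t)) (1 - 2*(e00 t))) := by
        rw [← h2]; exact mul_le_mul_of_nonneg_left hih q_nonneg
      have hstep := Bstep (u := e00 t) (e00_nonneg t) (e00_le_half t)
      linarith
    · rw [phiSum_succ_right n h]
      have hih := ih (2*t - 1) (by linarith) (by linarith)
      have h1 : e00 t = 1 - t := e00_right h ht1
      have h2 : e00 (2*t - 1) = min (2*(e00 t)) (1 - 2*(e00 t)) := by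
        rw [h1, e00_double_right h ht1]
        rw [min_comm]
        congr 1 <;> ring
      have hmul : (Real.sqrt 2)⁻¹ * phiSum n (2*t - 1) ≤
          (Real.sqrt 2)⁻¹ * Bfun (min (2*(e00 t)) (1 - 2*(e00 t))) := by
        rw [← h2]; exact mul_le_mul_of_nonneg_left hih q_nonneg
      have hstep := Bstep (u := e00 t) (e00_nonneg t) (e00_le_half t)
      linarith

private lemma dSum_nonneg (n : ℕ) (s t : ℝ) : 0 ≤ dSum n s t := by
  unfold dSum
  apply Finset.sum_nonneg
  intro m _
  apply mul_nonneg (by positivity)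
  exact Finset.sum_nonneg fun k _ => abs_nonneg _

private lemma abs_e00_le_half (s t : ℝ) : |e00 t - e00 s| ≤ 1/2 := by
  rw [abs_sub_le_iff]
  constructor <;> linarith [e00_nonneg s, e00_nonneg t, e00_le_half s, e00_le_half t]

private lemma dSum_le : ∀ n : ℕ, ∀ s t : ℝ, 0 ≤ s → s ≤ t → t ≤ 1 →
    dSum n s t ≤ (5 + 4*Real.sqrt 2)/6 := by
  intro n
  induction n with
  | zero =>
    intro s t _ _ _
    unfold dSum
    simp only [Finset.range_zero, Finset.sum_empty]
    nlinarith [sqrt2_pos]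
  | succ n ih =>
    intro s t hs0 hst ht1
    rcases le_total t (1/2) with h | h
    · rw [dSum_succ_left n (le_trans hst h) h]
      have hih := ih (2*s) (2*t) (by linarith) (by linarith) (by linarith)
      have := half_step hih (dSum_nonneg n (2*s) (2*t))
      linarith [abs_e00_le_half s t]
    · rcases le_total (1/2) s with h2 | h2
      · rw [dSum_succ_right n h2 h]
        have hih := ih (2*s - 1) (2*t - 1) (by linarith) (by linarith) (by linarith)
        have := half_step hih (dSum_nonneg n _ _)
        linarith [abs_e00_le_half s t]
      · have hb := dSum_succ_split n h2 h
        have hp1 := phiSum_le n (2*s) (by linarith) (by linarith)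
        have hp2 := phiSum_le n (2*t - 1) (by linarith) (by linarith)
        have hkey := key_split hs0 h2 h ht1
        have hmul : (Real.sqrt 2)⁻¹ * (phiSum n (2*s) + phiSum n (2*t - 1)) ≤
            (Real.sqrt 2)⁻¹ * (Bfun (e00 (2*s)) + Bfun (e00 (2*t - 1))) := by
          apply mul_le_mul_of_nonneg_left _ q_nonneg
          linarith
        linarith

private lemma sum_e00_le_half (N : ℕ) (x : ℝ) :
    ∑ k ∈ Finset.range N, e00 (x - k) ≤ 1/2 := by
  by_cases h : ∀ k ∈ Finset.range N, e00 (x - k) = 0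
  · rw [Finset.sum_eq_zero h]; norm_num
  · push_neg at h
    obtain ⟨k0, hk0mem, hk0⟩ := h
    have hx01 := e00_mem_of_ne hk0
    rw [Finset.sum_eq_single_of_mem k0 hk0mem]
    · exact e00_le_half _
    · intro b _ hb
      rcases Nat.lt_or_ge b k0 with hlt | hge
      · apply e00_zero_of_one_le
        have : (b:ℝ) + 1 ≤ (k0:ℝ) := by exact_mod_cast hlt
        linarith [hx01.1]
      · have hgt : k0 < b := lt_of_le_of_ne hge (Ne.symm hb)
        apply e00_zero_of_nonpos
        have : (k0:ℝ) + 1 ≤ (b:ℝ) := by exact_mod_cast hgt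
        linarith [hx01.2]

private lemma sum_abs_e00_le_one (N : ℕ) (x y : ℝ) :
    ∑ k ∈ Finset.range N, |e00 (x - k) - e00 (y - k)| ≤ 1 := by
  have h : ∑ k ∈ Finset.range N, |e00 (x - k) - e00 (y - k)|
      ≤ ∑ k ∈ Finset.range N, (e00 (x - k) + e00 (y - k)) := by
    apply Finset.sum_le_sum
    intro k _
    rw [abs_sub_le_iff]
    constructor <;> linarith [e00_nonneg (x - k), e00_nonneg (y - k)]
  rw [Finset.sum_add_distrib] at h
  linarith [sum_e00_le_half N x, sum_e00_le_half N y]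

private lemma psi_eq (m : ℕ) (s t : ℝ) :
    ∑ k ∈ Finset.range (2^m), |e m k t - e m k s|
    = ((Real.sqrt 2)⁻¹)^m *
        ∑ k ∈ Finset.range (2^m), |e00 ((2:ℝ)^m * t - k) - e00 ((2:ℝ)^m * s - k)| := by
  rw [Finset.mul_sum]
  apply Finset.sum_congr rfl
  intro k _
  unfold e
  rw [rpow_eq_qpow m, ← mul_sub, abs_mul, abs_of_nonneg (by positivity)]
  push_cast
  ring_nf

private lemma tsum_psi_le {s t : ℝ} (hs0 : 0 ≤ s) (hst : s ≤ t) (ht1 : t ≤ 1) :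
    ∑' m : ℕ, ∑ k ∈ Finset.range (2^m), |e m k t - e m k s| ≤ (5 + 4*Real.sqrt 2)/6 := by
  apply Real.tsum_le_of_sum_range_le
  · intro m
    exact Finset.sum_nonneg fun k _ => abs_nonneg _
  · intro n
    have : ∑ m ∈ Finset.range n, ∑ k ∈ Finset.range (2^m), |e m k t - e m k s|
        = dSum n s t := by
      unfold dSum
      exact Finset.sum_congr rfl fun m _ => psi_eq m s t
    rw [this]
    exact dSum_le n s t hs0 hst ht1

private lemma summable_psi (s t : ℝ) :
    Summable (fun m : ℕ => ∑ k ∈ Finset.range (2^m), |e m k t - e m k s|) := by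
  refine Summable.of_nonneg_of_le
    (fun m => Finset.sum_nonneg fun k _ => abs_nonneg _) (fun m => ?_)
    (summable_geometric_of_lt_one q_nonneg q_lt_one)
  rw [psi_eq]
  have h1 := sum_abs_e00_le_one (2^m) ((2:ℝ)^m * t) ((2:ℝ)^m * s)
  have hq : (0:ℝ) ≤ ((Real.sqrt 2)⁻¹)^m := by positivity
  nlinarith

private lemma summable_A (θ : ℕ → ℕ → ℝ) (hθ : ∀ m k, θ m k = 1 ∨ θ m k = -1) (t : ℝ) :
    Summable (fun m : ℕ => ∑ k ∈ Finset.range (2^m), θ m k * e m k t) := by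
  apply Summable.of_norm_bounded (g := fun m => ((Real.sqrt 2)⁻¹)^m * (1/2))
  · exact (summable_geometric_of_lt_one q_nonneg q_lt_one).mul_right _
  · intro m
    rw [Real.norm_eq_abs]
    calc |∑ k ∈ Finset.range (2^m), θ m k * e m k t|
        ≤ ∑ k ∈ Finset.range (2^m), |θ m k * e m k t| := Finset.abs_sum_le_sum_abs _ _
      _ = ∑ k ∈ Finset.range (2^m), e m k t := by
          apply Finset.sum_congr rfl
          intro k _
          rw [abs_mul]
          have h1 : |θ m k| = 1 := by rcases hθ m k with h | h <;> rw [h] <;> norm_num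
          rw [h1, one_mul, abs_of_nonneg]
          unfold e
          exact mul_nonneg (by positivity) (e00_nonneg _)
      _ ≤ ((Real.sqrt 2)⁻¹)^m * (1/2) := by
          have : ∑ k ∈ Finset.range (2^m), e m k t
              = ((Real.sqrt 2)⁻¹)^m * ∑ k ∈ Finset.range (2^m), e00 ((2:ℝ)^m * t - k) := by
            rw [Finset.mul_sum]
            apply Finset.sum_congr rfl
            intro k _
            unfold e
            rw [rpow_eq_qpow m]
            push_cast
            ring_nf
          rw [this]
          have hq : (0:ℝ) ≤ ((Real.sqrt 2)⁻¹)^m := by positivity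
          nlinarith [sum_e00_le_half (2^m) ((2:ℝ)^m * t)]

private lemma osc_le {x : ℝ → ℝ} (hx : x ∈ mathcalX) {s t : ℝ}
    (hs0 : 0 ≤ s) (hst : s ≤ t) (ht1 : t ≤ 1) :
    |x t - x s| ≤ (5 + 4*Real.sqrt 2)/6 := by
  obtain ⟨θ, hθ, hxe⟩ := hx
  rw [hxe t, hxe s]
  have hA := summable_A θ hθ t
  have hAs := summable_A θ hθ s
  rw [← Summable.tsum_sub hA hAs]
  have hdiff : ∀ m : ℕ,
      |(∑ k ∈ Finset.range (2^m), θ m k * e m k t) - ∑ k ∈ Finset.range (2^m), θ m k * e m k s|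
      ≤ ∑ k ∈ Finset.range (2^m), |e m k t - e m k s| := by
    intro m
    rw [← Finset.sum_sub_distrib]
    calc |∑ k ∈ Finset.range (2^m), (θ m k * e m k t - θ m k * e m k s)|
        ≤ ∑ k ∈ Finset.range (2^m), |θ m k * e m k t - θ m k * e m k s| :=
          Finset.abs_sum_le_sum_abs _ _
      _ = ∑ k ∈ Finset.range (2^m), |e m k t - e m k s| := by
          apply Finset.sum_congr rfl
          intro k _
          rw [← mul_sub, abs_mul]
          have h1 : |θ m k| = 1 := by rcases hθ m k with h | h <;> rw [h] <;> norm_num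
          rw [h1, one_mul]
  have hsub : Summable (fun m : ℕ =>
      (∑ k ∈ Finset.range (2^m), θ m k * e m k t) - ∑ k ∈ Finset.range (2^m), θ m k * e m k s) :=
    hA.sub hAs
  calc |∑' m : ℕ, ((∑ k ∈ Finset.range (2^m), θ m k * e m k t)
          - ∑ k ∈ Finset.range (2^m), θ m k * e m k s)|
      ≤ ∑' m : ℕ, |(∑ k ∈ Finset.range (2^m), θ m k * e m k t)
          - ∑ k ∈ Finset.range (2^m), θ m k * e m k s| := by
        have := norm_tsum_le_tsum_norm (f := fun m : ℕ =>
          (∑ k ∈ Finset.range (2^m), θ m k * e m k t)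
            - ∑ k ∈ Finset.range (2^m), θ m k * e m k s) ?_
        · simpa [Real.norm_eq_abs] using this
        · apply Summable.of_nonneg_of_le (fun m => norm_nonneg _) _ (summable_psi s t)
          intro m
          rw [Real.norm_eq_abs]
          exact hdiff m
    _ ≤ ∑' m : ℕ, ∑ k ∈ Finset.range (2^m), |e m k t - e m k s| := by
        apply Summable.tsum_le_tsum hdiff _ (summable_psi s t)
        apply Summable.of_nonneg_of_le (fun m => abs_nonneg _) hdiff (summable_psi s t)
    _ ≤ (5 + 4*Real.sqrt 2)/6 := tsum_psi_le hs0 hst ht1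

private lemma k0_exists : ∀ m : ℕ, ∃ k : ℕ, 3*k + 1 = 2^m ∨ 3*k + 2 = 2^m := by
  intro m
  induction m with
  | zero => exact ⟨0, Or.inl rfl⟩
  | succ n ih =>
    obtain ⟨k, hk | hk⟩ := ih
    · exact ⟨2*k, Or.inr (by rw [pow_succ]; omega)⟩
    · exact ⟨2*k + 1, Or.inl (by rw [pow_succ]; omega)⟩

private lemma e00_third : e00 (1/3) = 1/3 := by
  rw [e00_left] <;> norm_num

private lemma e00_two_third : e00 (2/3) = 1/3 := by
  rw [e00_right] <;> norm_num

private lemma inner_third (m : ℕ) :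
    ∑ k ∈ Finset.range (2^m), θstar m k * e m k (1/3) = ((Real.sqrt 2)⁻¹)^m * (1/3) := by
  obtain ⟨k0, hk⟩ := k0_exists m
  have hk0lt : k0 < 2^m := by rcases hk with h | h <;> omega
  have hr : (2:ℝ)^m * (1/3) - ((k0:ℤ):ℝ) = 1/3 ∨ (2:ℝ)^m * (1/3) - ((k0:ℤ):ℝ) = 2/3 := by
    rcases hk with h | h
    · left
      have : ((2^m : ℕ):ℝ) = 3*(k0:ℝ) + 1 := by exact_mod_cast h.symm
      push_cast at this ⊢
      linarith
    · right
      have : ((2^m : ℕ):ℝ) = 3*(k0:ℝ) + 2 := by exact_mod_cast h.symm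
      push_cast at this ⊢
      linarith
  rw [Finset.sum_eq_single_of_mem k0 (Finset.mem_range.mpr hk0lt)]
  · have hθ : θstar m k0 = 1 := by
      unfold θstar
      by_cases hm : m = 0
      · rw [if_pos hm]
      · rw [if_neg hm, if_pos]
        have h2 : 2^m = 2 * 2^(m-1) := by
          cases m with
          | zero => omega
          | succ n => rw [pow_succ]; simpa using (by ring : 2^n * 2 = 2 * 2^n)
        omega
    rw [hθ, one_mul]
    unfold e
    rw [rpow_eq_qpow m]
    rcases hr with h | h
    · rw [h, e00_third]
    · rw [h, e00_two_third]
  · intro b hb hbne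
    have hz : e00 ((2:ℝ)^m * (1/3) - ((b:ℤ):ℝ)) = 0 := by
      rcases Nat.lt_or_ge b k0 with hlt | hge
      · apply e00_zero_of_one_le
        have hble : (b:ℝ) + 1 ≤ (k0:ℝ) := by exact_mod_cast hlt
        push_cast
        rcases hr with h | h <;> push_cast at h <;> linarith
      · have hgt : k0 < b := lt_of_le_of_ne hge (Ne.symm hbne)
        apply e00_zero_of_nonpos
        have hble : (k0:ℝ) + 1 ≤ (b:ℝ) := by exact_mod_cast hgt
        push_cast
        rcases hr with h | h <;> push_cast at h <;> linarith
    unfold e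
    rw [hz, mul_zero, mul_zero]

private lemma inner_sixth (m : ℕ) :
    ∑ k ∈ Finset.range (2^m), θstar m k * e m k (5/6)
      = if m = 0 then (1:ℝ)/6 else -(((Real.sqrt 2)⁻¹)^m * (1/3)) := by
  cases m with
  | zero =>
    simp only [if_pos rfl]
    rw [pow_zero]
    rw [Finset.sum_range_one]
    unfold θstar e
    simp only [if_pos rfl, one_mul]
    norm_num
    rw [e00_right (by norm_num) (by norm_num)]
    norm_num
  | succ n =>
    simp only [Nat.succ_ne_zero, if_neg]
    obtain ⟨k0, hk⟩ := k0_exists n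
    -- define k1
    obtain ⟨k1, r', hr'12, hk1, hge, hlt⟩ :
        ∃ (k1 r' : ℕ), (r' = 1 ∨ r' = 2) ∧ 3*k1 + r' = 5*2^n ∧ 2^n ≤ k1 ∧ k1 < 2^(n+1) := by
      rcases hk with h | h
      · exact ⟨5*k0 + 1, 2, Or.inr rfl, by omega, by omega, by rw [pow_succ]; omega⟩
      · exact ⟨5*k0 + 3, 1, Or.inl rfl, by omega, by omega, by rw [pow_succ]; omega⟩
    have harg : (2:ℝ)^(n+1) * (5/6) - ((k1:ℤ):ℝ) = (r':ℝ)/3 := by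
      have h5 : 3*(k1:ℝ) + (r':ℝ) = 5*(2:ℝ)^n := by exact_mod_cast hk1
      push_cast [pow_succ]
      linarith
    rw [Finset.sum_eq_single_of_mem k1 (Finset.mem_range.mpr hlt)]
    · have hθ : θstar (n+1) k1 = -1 := by
        unfold θstar
        rw [if_neg (Nat.succ_ne_zero n), if_neg]
        simpa using (by omega : ¬ k1 < 2^n)
      rw [hθ]
      unfold e
      rw [rpow_eq_qpow (n+1), harg]
      rcases hr'12 with h | h
      · rw [h]; norm_num [e00_third, e00_two_third]
      · rw [h]; norm_num [e00_third, e00_two_third]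
    · intro b hb hbne
      have hz : e00 ((2:ℝ)^(n+1) * (5/6) - ((b:ℤ):ℝ)) = 0 := by
        have hrb : (r':ℝ)/3 ≤ 2/3 ∧ (1:ℝ)/3 ≤ (r':ℝ)/3 := by
          rcases hr'12 with h | h <;> rw [h] <;> norm_num
        rcases Nat.lt_or_ge b k1 with hlt2 | hge2
        · apply e00_zero_of_one_le
          have hble : (b:ℝ) + 1 ≤ (k1:ℝ) := by exact_mod_cast hlt2
          have := harg
          push_cast at this ⊢
          linarith [hrb.2]
        · have hgt : k1 < b := lt_of_le_of_ne hge2 (Ne.symm hbne)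
          apply e00_zero_of_nonpos
          have hble : (k1:ℝ) + 1 ≤ (b:ℝ) := by exact_mod_cast hgt
          have := harg
          push_cast at this ⊢
          linarith [hrb.1]
      unfold e
      rw [hz, mul_zero, mul_zero]

private lemma geo_inv : (1 - (Real.sqrt 2)⁻¹)⁻¹ = 2 + Real.sqrt 2 := by
  apply inv_eq_of_mul_eq_one_right
  rw [inv_sqrt2_eq]
  linear_combination (-1/2) * sq2

private lemma xstar_third : xstar (1/3) = (2 + Real.sqrt 2) * (1/3) := by
  unfold xstar
  rw [tsum_congr inner_third, tsum_mul_right,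
    tsum_geometric_of_lt_one q_nonneg q_lt_one, geo_inv]

private lemma xstar_sixth : xstar (5/6) = (-1/3) * (2 + Real.sqrt 2) + 1/2 := by
  unfold xstar
  rw [tsum_congr inner_sixth]
  have hfun : ∀ m : ℕ, (if m = 0 then (1:ℝ)/6 else -(((Real.sqrt 2)⁻¹)^m * (1/3)))
      = (-1/3) * ((Real.sqrt 2)⁻¹)^m + (if m = 0 then (1:ℝ)/2 else 0) := by
    intro m
    cases m with
    | zero => norm_num
    | succ n =>
      rw [if_neg (Nat.succ_ne_zero n), if_neg (Nat.succ_ne_zero n)]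
      ring
  rw [tsum_congr hfun]
  have H1 : HasSum (fun m : ℕ => (-1/3 : ℝ) * ((Real.sqrt 2)⁻¹)^m)
      ((-1/3) * (1 - (Real.sqrt 2)⁻¹)⁻¹) :=
    (hasSum_geometric_of_lt_one q_nonneg q_lt_one).mul_left _
  have H2 : HasSum (fun m : ℕ => if m = 0 then (1:ℝ)/2 else 0) (1/2) :=
    hasSum_ite_eq 0 (1/2)
  rw [(H1.add H2).tsum_eq, geo_inv]

private lemma xstar_diff : |xstar (5/6) - xstar (1/3)| = (5 + 4*Real.sqrt 2)/6 := by
  rw [xstar_sixth, xstar_third]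
  rw [abs_of_nonpos (by nlinarith [sqrt2_pos])]
  ring

theorem stmt_8 :
    (∀ x ∈ mathcalX, ∀ s ∈ Set.Icc (0 : ℝ) 1, ∀ t ∈ Set.Icc (0 : ℝ) 1,
      |x t - x s| ≤ (5 + 4 * Real.sqrt 2) / 6) ∧
    xstar ∈ mathcalX ∧
    |xstar (5 / 6) - xstar (1 / 3)| = (5 + 4 * Real.sqrt 2) / 6 := by
  refine ⟨?_, ?_, ?_⟩
  · intro x hx s hs t ht
    rcases le_total s t with h | h
    · exact osc_le hx hs.1 h ht.2
    · rw [abs_sub_comm]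
      exact osc_le hx ht.1 h hs.2
  · exact ⟨θstar, fun m k => by unfold θstar; split_ifs <;> simp, fun t => rfl⟩
  · exact xstar_diff
end
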